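/- arXiv:1310.5317 — 3 statements merged into one kernel-verified Lean document; each statement's English description precedes it below -/
import Mathlib

section
/- Let k ≥ 2 be an integer. If a graph Σ admits a nowhere-zero k-flow, then every multicover Γ of Σ admits a nowhere-zero k-flow. -/
/-- A graph admits a nowhere-zero `k`-flow. -/
def HasNowhereZeroFlow {V : Type*} [Fintype V] (Γ : SimpleGraph V) (k : ℕ) : Prop :=
  ∃ f : V → V → ℤ,
    (∀ u v, f u v = - f v u) ∧
    (∀ u v, ¬ Γ.Adj u v → f u v = 0) ∧
    (∀ u v, Γ.Adj u v → f u v ≠ 0 ∧ |f u v| < (k : ℤ)) ∧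
    (∀ u, ∑ v, f u v = 0)

/-- If a graph `Sg` admits a nowhere-zero `k`-flow (`k ≥ 2`), then every multicover
`Γ` of `Sg` admits a nowhere-zero `k`-flow.  Here `p : V → ι` is the partition map,
`Sg` is the quotient graph of `Γ` with respect to the fibres of `p`, every fibre is
an independent set, and for every adjacent pair of blocks the bipartite graph between
them is `t`-regular for a constant `t ≥ 1`. -/
theorem multicover_flow {V ι : Type*} [Fintype V] [Fintype ι]
    (k : ℕ) (hk : 2 ≤ k)
    (Γ : SimpleGraph V) (Sg : SimpleGraph ι) (p : V → ι)
    (hsurj : Function.Surjective p)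
    (hquot : ∀ i j, Sg.Adj i j ↔ i ≠ j ∧ ∃ u v, Γ.Adj u v ∧ p u = i ∧ p v = j)
    (hind : ∀ u v, Γ.Adj u v → p u ≠ p v)
    (t : ℕ) (ht : 1 ≤ t)
    (hreg : ∀ u : V, ∀ j : ι, Sg.Adj (p u) j → Set.ncard {v | Γ.Adj u v ∧ p v = j} = t)
    (hflow : HasNowhereZeroFlow Sg k) :
    HasNowhereZeroFlow Γ k := by
  classical
  obtain ⟨g, hskew, hzero, hnz, hsum⟩ := hflow
  have hadj : ∀ u v, Γ.Adj u v → Sg.Adj (p u) (p v) := fun u v h =>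
    (hquot _ _).2 ⟨hind u v h, u, v, h, rfl, rfl⟩
  refine ⟨fun u v => if Γ.Adj u v then g (p u) (p v) else 0, ?_, ?_, ?_, ?_⟩
  · intro u v
    dsimp only
    by_cases h : Γ.Adj u v
    · rw [if_pos h, if_pos h.symm, hskew]
    · rw [if_neg h, if_neg (fun h' => h h'.symm), neg_zero]
  · intro u v h; exact if_neg h
  · intro u v h
    dsimp only
    rw [if_pos h]
    exact hnz _ _ (hadj u v h)
  · intro u
    dsimp only
    have key : ∀ j : ι, (∑ v ∈ Finset.univ.filter (fun v => p v = j),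
        (if Γ.Adj u v then g (p u) (p v) else 0)) = (t : ℤ) * g (p u) j := by
      intro j
      have step : ∀ v ∈ Finset.univ.filter (fun v => p v = j),
          (if Γ.Adj u v then g (p u) (p v) else 0)
            = (if Γ.Adj u v ∧ p v = j then g (p u) j else 0) := by
        intro v hv
        simp only [Finset.mem_filter] at hv
        by_cases h : Γ.Adj u v
        · rw [if_pos h, if_pos ⟨h, hv.2⟩, hv.2]
        · rw [if_neg h, if_neg (fun h' => h h'.1)]
      rw [Finset.sum_congr rfl step]
      have : (∑ v ∈ Finset.univ.filter (fun v => p v = j),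
          (if Γ.Adj u v ∧ p v = j then g (p u) j else 0))
          = (∑ v ∈ Finset.univ, (if Γ.Adj u v ∧ p v = j then g (p u) j else 0)) := by
        refine (Finset.sum_subset (Finset.filter_subset _ _) ?_)
        intro v _ hv
        simp only [Finset.mem_filter, Finset.mem_univ, true_and] at hv
        exact if_neg (fun h' => hv h'.2)
      rw [this, ← Finset.sum_filter, Finset.sum_const, nsmul_eq_mul]
      have hcard : (Finset.univ.filter (fun v => Γ.Adj u v ∧ p v = j)).card
          = {v | Γ.Adj u v ∧ p v = j}.ncard := by
        rw [Set.ncard_eq_toFinset_card', Set.toFinset_setOf]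
      by_cases hSg : Sg.Adj (p u) j
      · rw [hcard, hreg u j hSg]
      · have h0 : ∀ v, ¬ (Γ.Adj u v ∧ p v = j) := by
          rintro v ⟨h1, h2⟩
          exact hSg (h2 ▸ hadj u v h1)
        rw [hzero _ _ hSg, mul_zero, mul_zero]
    calc ∑ v, (if Γ.Adj u v then g (p u) (p v) else 0)
        = ∑ j, ∑ v ∈ Finset.univ.filter (fun v => p v = j),
            (if Γ.Adj u v then g (p u) (p v) else 0) :=
          (Finset.sum_fiberwise Finset.univ p _).symm
      _ = ∑ j, (t : ℤ) * g (p u) j := Finset.sum_congr rfl fun j _ => key j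
      _ = (t : ℤ) * ∑ j, g (p u) j := (Finset.mul_sum _ _ _).symm
      _ = 0 := by rw [hsum, mul_zero]
end

section
/- Every regular bipartite graph of valency at least 2 admits a nowhere-zero 3-flow. -/
open Finset

section Helpers

variable {V : Type*} [Fintype V] [DecidableEq V]

/-- Hall side: injection from `A` into neighbors. -/
lemma hall_side (Γ : SimpleGraph V) [DecidableRel Γ.Adj] (A : Set V)
    (d : ℕ) (hreg : ∀ v, Γ.degree v = d) (hd : 1 ≤ d) :
    ∃ g : {v : V // v ∈ A} → V, Function.Injective g ∧
      ∀ a, g a ∈ Γ.neighborFinset a.val := by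
  classical
  rw [← Finset.all_card_le_biUnion_card_iff_exists_injective]
  intro s
  set t : {v : V // v ∈ A} → Finset V := fun a => Γ.neighborFinset a.val with ht
  set N := s.biUnion t with hN
  have hsub : ∀ a ∈ s, t a ⊆ N := fun a ha => Finset.subset_biUnion_of_mem t ha
  have key : ∀ b : V, (s.filter (fun a => b ∈ t a)).card ≤ d := by
    intro b
    have : (s.filter (fun a => b ∈ t a)).card ≤ (Γ.neighborFinset b).card := by
      apply Finset.card_le_card_of_injOn (fun a => a.val)
      · intro a ha
        simp only [Finset.mem_filter, ht, SimpleGraph.mem_neighborFinset] at ha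
        simpa [SimpleGraph.mem_neighborFinset] using (Finset.mem_filter.mp ha).2.symm
      · intro a _ a' _ h
        exact Subtype.ext h
    simpa [hreg b] using this
  have main : d * s.card ≤ d * N.card := by
    calc d * s.card = ∑ a ∈ s, (t a).card := by
          have h1 : ∀ a ∈ s, (t a).card = d := fun a _ => hreg a.val
          rw [Finset.sum_congr rfl h1, Finset.sum_const, smul_eq_mul, mul_comm]
      _ = ∑ a ∈ s, ∑ b ∈ N, (if b ∈ t a then 1 else 0) := by
          apply Finset.sum_congr rfl
          intro a ha
          rw [Finset.sum_boole]
          norm_cast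
          rw [Finset.filter_mem_eq_inter, Finset.inter_eq_right.mpr (hsub a ha)]
      _ = ∑ b ∈ N, ∑ a ∈ s, (if b ∈ t a then 1 else 0) := Finset.sum_comm
      _ = ∑ b ∈ N, (s.filter (fun a => b ∈ t a)).card := by
          apply Finset.sum_congr rfl
          intro b _
          rw [Finset.sum_boole]
          norm_cast
      _ ≤ ∑ _b ∈ N, d := Finset.sum_le_sum (fun b _ => key b)
      _ = d * N.card := by simp [mul_comm]
  exact Nat.le_of_mul_le_mul_left main hd

/-- A regular bipartite graph with positive degree has a perfect matching
(given as an involution). -/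
lemma exists_matching (Γ : SimpleGraph V) [DecidableRel Γ.Adj] (A : Set V)
    (hbip : ∀ u v, Γ.Adj u v → (u ∈ A ↔ v ∉ A)) (d : ℕ)
    (hreg : ∀ v, Γ.degree v = d) (hd : 1 ≤ d) :
    ∃ m : V → V, (∀ v, m (m v) = v) ∧ (∀ v, Γ.Adj v (m v)) := by
  classical
  obtain ⟨g, hginj, hg⟩ := hall_side Γ A d hreg hd
  obtain ⟨h, hhinj, hh⟩ := hall_side Γ Aᶜ d hreg hd
  have hgB : ∀ a : {v : V // v ∈ A}, g a ∈ Aᶜ := by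
    intro a
    have hadj : Γ.Adj a.val (g a) := by
      have := hg a; rwa [SimpleGraph.mem_neighborFinset] at this
    exact (hbip a.val (g a) hadj).mp a.property
  have hhA : ∀ b : {v : V // v ∈ Aᶜ}, h b ∈ A := by
    intro b
    have hadj : Γ.Adj b.val (h b) := by
      have := hh b; rwa [SimpleGraph.mem_neighborFinset] at this
    exact (hbip (h b) b.val hadj.symm).mpr b.property
  set g' : {v : V // v ∈ A} → {v : V // v ∈ Aᶜ} := fun a => ⟨g a, hgB a⟩ with hg'
  have hg'inj : Function.Injective g' := by
    intro a a' hae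
    exact hginj (congrArg Subtype.val hae)
  set h' : {v : V // v ∈ Aᶜ} → {v : V // v ∈ A} := fun b => ⟨h b, hhA b⟩ with hh'
  have hh'inj : Function.Injective h' := by
    intro a a' hae
    exact hhinj (congrArg Subtype.val hae)
  have hcard : Fintype.card {v : V // v ∈ A} = Fintype.card {v : V // v ∈ Aᶜ} :=
    le_antisymm (Fintype.card_le_of_injective g' hg'inj)
      (Fintype.card_le_of_injective h' hh'inj)
  have hbij : Function.Bijective g' :=
    (Fintype.bijective_iff_injective_and_card g').mpr ⟨hg'inj, hcard⟩
  set e := Equiv.ofBijective g' hbij with he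
  have heapp : ∀ a, e a = g' a := fun a => rfl
  refine ⟨fun v => if hv : v ∈ A then (g' ⟨v, hv⟩ : V)
      else (e.symm ⟨v, hv⟩ : V), ?_, ?_⟩
  · intro v
    beta_reduce
    by_cases hv : v ∈ A
    · rw [dif_pos hv]
      have hmem : (g' ⟨v, hv⟩ : V) ∈ Aᶜ := (g' ⟨v, hv⟩).property
      rw [dif_neg hmem]
      have : (⟨(g' ⟨v, hv⟩ : V), hmem⟩ : {v : V // v ∈ Aᶜ}) = e ⟨v, hv⟩ :=
        Subtype.ext rfl
      rw [this, e.symm_apply_apply]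
    · rw [dif_neg hv]
      have hmem : (e.symm ⟨v, hv⟩ : V) ∈ A := (e.symm ⟨v, hv⟩).property
      rw [dif_pos hmem]
      have : g' ⟨(e.symm ⟨v, hv⟩ : V), hmem⟩ = e (e.symm ⟨v, hv⟩) := by
        rw [heapp]
      rw [this, e.apply_symm_apply]
  · intro v
    beta_reduce
    by_cases hv : v ∈ A
    · rw [dif_pos hv]
      have := hg ⟨v, hv⟩
      rwa [SimpleGraph.mem_neighborFinset] at this
    · rw [dif_neg hv]
      have hval : (g' (e.symm ⟨v, hv⟩) : V) = v := by
        have : e (e.symm ⟨v, hv⟩) = ⟨v, hv⟩ := e.apply_symm_apply _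
        rw [heapp] at this
        exact congrArg Subtype.val this
      have hadj : Γ.Adj ((e.symm ⟨v, hv⟩ : {v : V // v ∈ A}) : V)
          (g' (e.symm ⟨v, hv⟩) : V) := by
        have := hg (e.symm ⟨v, hv⟩)
        rwa [SimpleGraph.mem_neighborFinset] at this
      rw [hval] at hadj
      exact hadj.symm

end Helpers

section Decomp

variable {V : Type*} [Fintype V] [DecidableEq V]

/-- A regular bipartite graph decomposes into `d` edge-disjoint perfect matchings. -/
lemma decomp (A : Set V) : ∀ (d : ℕ) (Γ : SimpleGraph V) (_ : DecidableRel Γ.Adj),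
    (∀ u v, Γ.Adj u v → (u ∈ A ↔ v ∉ A)) → (∀ v, Γ.degree v = d) →
    ∃ ms : ℕ → V → V,
      (∀ i, i < d → ∀ v, Γ.Adj v (ms i v)) ∧
      (∀ i, i < d → ∀ v, ms i (ms i v) = v) ∧
      (∀ i j, i < d → j < d → i ≠ j → ∀ v, ms i v ≠ ms j v) := by
  intro d
  induction d with
  | zero =>
    intro Γ _ _ _
    exact ⟨fun _ v => v, fun i hi => absurd hi (Nat.not_lt_zero i),
      fun i hi => absurd hi (Nat.not_lt_zero i),
      fun i j hi => absurd hi (Nat.not_lt_zero i)⟩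
  | succ d ih =>
    intro Γ inst hbip hreg
    obtain ⟨m, hminv, hmadj⟩ := exists_matching Γ A hbip (d + 1) hreg (Nat.succ_le_succ (Nat.zero_le d))
    set Γ' : SimpleGraph V :=
      { Adj := fun u v => Γ.Adj u v ∧ m u ≠ v
        symm := by
          constructor
          intro u v ⟨hadj, hne⟩
          refine ⟨hadj.symm, fun hmv => hne ?_⟩
          rw [← hmv, hminv v]
        loopless := ⟨fun v h => Γ.loopless.irrefl v h.1⟩ } with hΓ'
    letI inst' : DecidableRel Γ'.Adj := Classical.decRel _
    have hadj' : ∀ u v, Γ'.Adj u v ↔ Γ.Adj u v ∧ m u ≠ v := fun u v => Iff.rfl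
    have hbip' : ∀ u v, Γ'.Adj u v → (u ∈ A ↔ v ∉ A) :=
      fun u v h => hbip u v h.1
    have hreg' : ∀ v, Γ'.degree v = d := by
      intro v
      have hnb : Γ'.neighborFinset v = (Γ.neighborFinset v).erase (m v) := by
        ext u
        simp only [SimpleGraph.mem_neighborFinset, Finset.mem_erase, hadj']
        constructor
        · rintro ⟨h1, h2⟩
          exact ⟨fun h => h2 h.symm, h1⟩
        · rintro ⟨h1, h2⟩
          exact ⟨h2, fun h => h1 h.symm⟩
      have hmem : m v ∈ Γ.neighborFinset v := by
        rw [SimpleGraph.mem_neighborFinset]; exact hmadj v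
      rw [SimpleGraph.degree, hnb, Finset.card_erase_of_mem hmem]
      rw [← SimpleGraph.degree, hreg v]
      omega
    obtain ⟨ms', h1, h2, h3⟩ := ih Γ' inst' hbip' hreg'
    refine ⟨fun i => if i = 0 then m else ms' (i - 1), ?_, ?_, ?_⟩
    · intro i hi v
      by_cases h0 : i = 0
      · simpa [h0] using hmadj v
      · have : i - 1 < d := by omega
        simpa [h0] using (h1 (i - 1) this v).1
    · intro i hi v
      by_cases h0 : i = 0
      · simpa [h0] using hminv v
      · have : i - 1 < d := by omega
        simpa [h0] using h2 (i - 1) this v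
    · intro i j hi hj hij v
      by_cases h0 : i = 0
      · have hj0 : ¬ j = 0 := by omega
        have hjd : j - 1 < d := by omega
        simpa [h0, hj0] using (h1 (j - 1) hjd v).2
      · by_cases hj0 : j = 0
        · have hid : i - 1 < d := by omega
          simpa [h0, hj0] using ((h1 (i - 1) hid v).2).symm
        · have hid : i - 1 < d := by omega
          have hjd : j - 1 < d := by omega
          have hne : i - 1 ≠ j - 1 := by omega
          simpa [h0, hj0] using h3 (i - 1) (j - 1) hid hjd hne v

/-- Nonzero coefficients of absolute value at most 2 summing to zero. -/
lemma exists_coeffs : ∀ d : ℕ, 2 ≤ d →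
    ∃ c : ℕ → ℤ, (∀ i, i < d → c i ≠ 0 ∧ |c i| < 3) ∧
      ∑ i ∈ Finset.range d, c i = 0 := by
  intro d
  induction d using Nat.strong_induction_on with
  | _ d ih =>
    intro hd
    rcases Nat.lt_or_ge d 4 with h4 | h4
    · interval_cases d
      · refine ⟨fun i => if i = 0 then 1 else -1, ?_, by decide⟩
        intro i hi
        by_cases h : i = 0 <;> norm_num [h]
      · refine ⟨fun i => if i = 0 then 2 else -1, ?_, by decide⟩
        intro i hi
        by_cases h : i = 0 <;> norm_num [h]
    · obtain ⟨k, rfl⟩ : ∃ k, d = k + 2 := ⟨d - 2, by omega⟩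
      obtain ⟨c, hc, hsum⟩ := ih k (by omega) (by omega)
      refine ⟨fun i => if i = k then 1 else if i = k + 1 then -1 else c i, ?_, ?_⟩
      · intro i hi
        by_cases h1 : i = k
        · norm_num [h1]
        · by_cases h2 : i = k + 1
          · norm_num [h1, h2, show ¬(k + 1 = k) by omega]
          · simpa [h1, h2] using hc i (by omega)
      · rw [Finset.sum_range_succ, Finset.sum_range_succ]
        have hmid : ∀ i ∈ Finset.range k,
            (if i = k then (1:ℤ) else if i = k + 1 then -1 else c i) = c i := by
          intro i hi
          rw [Finset.mem_range] at hi
          simp [Nat.ne_of_lt hi, show i ≠ k + 1 by omega]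
        rw [Finset.sum_congr rfl hmid, hsum]
        simp [show ¬(k + 1 = k) by omega]

end Decomp

/-- Every regular bipartite graph of valency at least `2` admits a nowhere-zero 3-flow. -/
theorem regular_bipartite_three_flow {V : Type*} [Fintype V] [DecidableEq V]
    (Γ : SimpleGraph V) [DecidableRel Γ.Adj]
    (A : Set V) (hbip : ∀ u v, Γ.Adj u v → (u ∈ A ↔ v ∉ A))
    (d : ℕ) (hreg : ∀ v, Γ.degree v = d) (hd : 2 ≤ d) :
    HasNowhereZeroFlow Γ 3 := by
  classical
  obtain ⟨ms, hadj, hinv, hdisj⟩ := decomp A d Γ inferInstance hbip hreg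
  obtain ⟨c, hc, hcsum⟩ := exists_coeffs d hd
  set S : V → V → ℤ := fun u v => ∑ i ∈ Finset.range d, if ms i u = v then c i else 0
    with hS
  -- S vanishes on non-edges
  have hS0 : ∀ u v, ¬ Γ.Adj u v → S u v = 0 := by
    intro u v huv
    apply Finset.sum_eq_zero
    intro i hi
    rw [Finset.mem_range] at hi
    have : ms i u ≠ v := fun h => huv (h ▸ hadj i hi u)
    simp [this]
  -- on each edge S equals a single coefficient
  have hcover : ∀ u v, Γ.Adj u v → ∃ i, i < d ∧ ms i u = v ∧ S u v = c i := by
    intro u v huv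
    have himg : (Finset.range d).image (fun i => ms i u) = Γ.neighborFinset u := by
      apply Finset.eq_of_subset_of_card_le
      · intro x hx
        rw [Finset.mem_image] at hx
        obtain ⟨i, hi, hix⟩ := hx
        rw [Finset.mem_range] at hi
        rw [SimpleGraph.mem_neighborFinset, ← hix]
        exact hadj i hi u
      · rw [SimpleGraph.card_neighborFinset_eq_degree, hreg u]
        rw [Finset.card_image_of_injOn]
        · simp
        · intro i hi j hj hij
          by_contra hne
          exact hdisj i j (Finset.mem_range.mp hi) (Finset.mem_range.mp hj) hne u hij
    have hv : v ∈ (Finset.range d).image (fun i => ms i u) := by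
      rw [himg, SimpleGraph.mem_neighborFinset]; exact huv
    rw [Finset.mem_image] at hv
    obtain ⟨i, hi, hiv⟩ := hv
    rw [Finset.mem_range] at hi
    refine ⟨i, hi, hiv, ?_⟩
    simp only [hS]
    rw [Finset.sum_eq_single_of_mem i (Finset.mem_range.mpr hi)]
    · simp [hiv]
    · intro j hj hji
      have : ms j u ≠ v := by
        intro h
        exact hdisj j i (Finset.mem_range.mp hj) hi hji u (h.trans hiv.symm)
      simp [this]
  -- row sums of S vanish
  have hSrow : ∀ u, ∑ v, S u v = 0 := by
    intro u
    rw [hS]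
    simp only []
    rw [Finset.sum_comm]
    rw [show ∑ i ∈ Finset.range d, ∑ v : V, (if ms i u = v then c i else 0)
        = ∑ i ∈ Finset.range d, c i from
      Finset.sum_congr rfl (fun i _ => by rw [Finset.sum_ite_eq]; simp)]
    exact hcsum
  -- column sums of S vanish
  have hScol : ∀ u, ∑ v, S v u = 0 := by
    intro u
    rw [hS]
    simp only []
    rw [Finset.sum_comm]
    rw [show ∑ i ∈ Finset.range d, ∑ v : V, (if ms i v = u then c i else 0)
        = ∑ i ∈ Finset.range d, c i from ?_]
    · exact hcsum
    apply Finset.sum_congr rfl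
    intro i hi
    rw [Finset.mem_range] at hi
    have hiff : ∀ v : V, (ms i v = u) ↔ (v = ms i u) := by
      intro v
      constructor
      · intro h; rw [← h, hinv i hi v]
      · intro h; rw [h, hinv i hi u]
    rw [show (fun v => if ms i v = u then c i else (0:ℤ))
        = fun v => if v = ms i u then c i else 0 from funext fun v => by
          by_cases h : ms i v = u
          · rw [if_pos h, if_pos ((hiff v).mp h)]
          · rw [if_neg h, if_neg (fun h' => h ((hiff v).mpr h'))]]
    rw [Finset.sum_ite_eq']
    simp
  -- no adjacency within a side
  have hside : ∀ u v : V, (u ∈ A ↔ v ∈ A) → ¬ Γ.Adj u v := by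
    intro u v hmem huv
    have := hbip u v huv
    tauto
  refine ⟨fun u v => if u ∈ A then S u v else -(S v u), ?_, ?_, ?_, ?_⟩
  · intro u v
    by_cases hu : u ∈ A <;> by_cases hv : v ∈ A
    · have h1 : S u v = 0 := hS0 u v (hside u v (by tauto))
      have h2 : S v u = 0 := hS0 v u (hside v u (by tauto))
      simp [hu, hv, h1, h2]
    · simp [hu, hv]
    · simp [hu, hv]
    · have h1 : S u v = 0 := hS0 u v (hside u v (by tauto))
      have h2 : S v u = 0 := hS0 v u (hside v u (by tauto))
      simp [hu, hv, h1, h2]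
  · intro u v huv
    have h1 : S u v = 0 := hS0 u v huv
    have h2 : S v u = 0 := hS0 v u (fun h => huv h.symm)
    by_cases hu : u ∈ A <;> simp [hu, h1, h2]
  · intro u v huv
    by_cases hu : u ∈ A
    · obtain ⟨i, hi, _, hSc⟩ := hcover u v huv
      have := hc i hi
      simp only [if_pos hu, hSc]
      exact ⟨this.1, by exact_mod_cast this.2⟩
    · obtain ⟨i, hi, _, hSc⟩ := hcover v u huv.symm
      have := hc i hi
      simp only [if_neg hu, hSc]
      constructor
      · simpa using this.1
      · rw [abs_neg]
        exact_mod_cast this.2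
  · intro u
    by_cases hu : u ∈ A
    · simp only [if_pos hu]
      exact hSrow u
    · simp only [if_neg hu]
      rw [Finset.sum_neg_distrib, hScol u, neg_zero]
end

section
/- If Γ is a graph that is both G-vertex-transitive and G-edge-transitive and Γ is regular of odd valency, then Γ is G-arc-transitive. -/
/-- If a finite graph `Γ` is both `G`-vertex-transitive and `G`-edge-transitive and is
regular of odd valency, then `Γ` is `G`-arc-transitive. -/
theorem vt_et_odd_implies_at {V G : Type*} [Fintype V] [DecidableEq V] [Group G]
    [MulAction G V]
    (Γ : SimpleGraph V) [DecidableRel Γ.Adj]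
    (hAut : ∀ (g : G) (u v : V), Γ.Adj (g • u) (g • v) ↔ Γ.Adj u v)
    (hvt : ∀ u v : V, ∃ g : G, g • u = v)
    (het : ∀ u v u' v' : V, Γ.Adj u v → Γ.Adj u' v' →
      ∃ g : G, (g • u = u' ∧ g • v = v') ∨ (g • u = v' ∧ g • v = u'))
    (d : ℕ) (hreg : ∀ v, Γ.degree v = d) (hodd : Odd d) :
    ∀ u v u' v' : V, Γ.Adj u v → Γ.Adj u' v' → ∃ g : G, g • u = u' ∧ g • v = v' := by
  classical
  intro u v u' v' huv hu'v'
  by_cases hsw : ∃ h : G, h • u' = v' ∧ h • v' = u'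
  · obtain ⟨h, h1, h2⟩ := hsw
    obtain ⟨g, hg | hg⟩ := het u v u' v' huv hu'v'
    · exact ⟨g, hg⟩
    · exact ⟨h * g, by rw [mul_smul, hg.1, h2], by rw [mul_smul, hg.2, h1]⟩
  · exfalso
    set pos : V → V → Prop := fun x y => ∃ g : G, g • u' = x ∧ g • v' = y with hposdef
    have posG : ∀ (h : G) (x y : V), pos x y → pos (h • x) (h • y) := by
      rintro h x y ⟨g, hg1, hg2⟩
      exact ⟨h * g, by rw [mul_smul, hg1], by rw [mul_smul, hg2]⟩
    have total : ∀ x y, Γ.Adj x y → pos x y ∨ pos y x := by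
      intro x y hxy
      obtain ⟨g, hg | hg⟩ := het u' v' x y hu'v' hxy
      · exact Or.inl ⟨g, hg⟩
      · exact Or.inr ⟨g, hg⟩
    have antisym : ∀ x y, pos x y → pos y x → False := by
      rintro x y ⟨g1, h11, h12⟩ ⟨g2, h21, h22⟩
      exact hsw ⟨g2⁻¹ * g1, by rw [mul_smul, h11, ← h22, inv_smul_smul],
        by rw [mul_smul, h12, ← h21, inv_smul_smul]⟩
    set O : V → Finset V := fun x => Finset.univ.filter (fun y => Γ.Adj x y ∧ pos x y) with hOdef
    set I : V → Finset V := fun x => Finset.univ.filter (fun y => Γ.Adj x y ∧ pos y x) with hIdef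
    -- O and I partition the neighborhood
    have hOI : ∀ x, (O x).card + (I x).card = d := by
      intro x
      have hOx : O x = (Γ.neighborFinset x).filter (fun y => pos x y) := by
        rw [SimpleGraph.neighborFinset_eq_filter, Finset.filter_filter]
      have hIx : I x = (Γ.neighborFinset x).filter (fun y => ¬ pos x y) := by
        rw [SimpleGraph.neighborFinset_eq_filter, Finset.filter_filter]
        apply Finset.filter_congr
        intro y _
        constructor
        · rintro ⟨hxy, hp⟩
          exact ⟨hxy, fun hq => antisym x y hq hp⟩
        · rintro ⟨hxy, hn⟩
          rcases total x y hxy with hq | hq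
          · exact absurd hq hn
          · exact ⟨hxy, hq⟩
      rw [hOx, hIx, Finset.card_filter_add_card_filter_not]
      exact hreg x
    -- constancy of out- and in-degrees
    have hmem : ∀ (h : G) (x z : V), z ∈ O x → h • z ∈ O (h • x) := by
      intro h x z hz
      rw [hOdef] at *
      simp only [Finset.mem_filter, Finset.mem_univ, true_and] at *
      exact ⟨(hAut h x z).mpr hz.1, posG h x z hz.2⟩
    have hmemI : ∀ (h : G) (x z : V), z ∈ I x → h • z ∈ I (h • x) := by
      intro h x z hz
      rw [hIdef] at *
      simp only [Finset.mem_filter, Finset.mem_univ, true_and] at *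
      exact ⟨(hAut h x z).mpr hz.1, posG h z x hz.2⟩
    have hOconst : ∀ x y, (O x).card = (O y).card := by
      intro x y
      obtain ⟨h, hh⟩ := hvt x y
      refine Finset.card_bij' (fun z _ => h • z) (fun z _ => h⁻¹ • z) ?_ ?_ ?_ ?_
      · intro z hz
        rw [← hh]
        exact hmem h x z hz
      · intro z hz
        have := hmem h⁻¹ y z hz
        rwa [← hh, inv_smul_smul] at this
      · intro z _
        exact inv_smul_smul h z
      · intro z _
        exact smul_inv_smul h z
    have hIconst : ∀ x y, (I x).card = (I y).card := by
      intro x y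
      obtain ⟨h, hh⟩ := hvt x y
      refine Finset.card_bij' (fun z _ => h • z) (fun z _ => h⁻¹ • z) ?_ ?_ ?_ ?_
      · intro z hz
        rw [← hh]
        exact hmemI h x z hz
      · intro z hz
        have := hmemI h⁻¹ y z hz
        rwa [← hh, inv_smul_smul] at this
      · intro z _
        exact inv_smul_smul h z
      · intro z _
        exact smul_inv_smul h z
    -- double counting
    have hsum : ∑ x : V, (O x).card = ∑ x : V, (I x).card := by
      have h1 : ∀ x : V, (O x).card
          = ∑ y : V, if Γ.Adj x y ∧ pos x y then 1 else 0 := by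
        intro x; rw [hOdef]; exact Finset.card_filter _ _
      have h2 : ∀ x : V, (I x).card
          = ∑ y : V, if Γ.Adj x y ∧ pos y x then 1 else 0 := by
        intro x; rw [hIdef]; exact Finset.card_filter _ _
      simp only [h1, h2]
      rw [Finset.sum_comm]
      refine Finset.sum_congr rfl fun x _ => Finset.sum_congr rfl fun y _ => ?_
      congr 1
      rw [eq_iff_iff]
      constructor
      · rintro ⟨ha, hp⟩; exact ⟨ha.symm, hp⟩
      · rintro ⟨ha, hp⟩; exact ⟨ha.symm, hp⟩
    have hNE : Nonempty V := ⟨u'⟩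
    have hOsum : ∑ x : V, (O x).card = Fintype.card V * (O u').card := by
      rw [Finset.sum_congr rfl fun x _ => hOconst x u']
      simp [Finset.sum_const, Finset.card_univ, mul_comm]
    have hIsum : ∑ x : V, (I x).card = Fintype.card V * (I u').card := by
      rw [Finset.sum_congr rfl fun x _ => hIconst x u']
      simp [Finset.sum_const, Finset.card_univ, mul_comm]
    have hV : 0 < Fintype.card V := Fintype.card_pos
    have heq : (O u').card = (I u').card := by
      have := hsum
      rw [hOsum, hIsum] at this
      exact Nat.eq_of_mul_eq_mul_left hV this
    obtain ⟨k, hk⟩ := hodd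
    have := hOI u'
    omega
end
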